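/- Let (σₙ,τ₀ₙ,τ₁ₙ)_{n≥0} be an arbitrary sequence of triples of permutations in S₃, let i : ℕ → {0,1} be any sequence, and let k ∈ ℕ. Then Δ(i₀,i₁,…) is a singleton if and only if the intersection Δ(i_k,i_{k+1},…) formed from the shifted digit sequence m ↦ i_{m+k} together with the shifted sequence of triples m ↦ (σ_{m+k},τ₀,_{m+k},τ₁,_{m+k}) is a singleton. -/

import Mathlib

open Matrix

noncomputable section

/-- `A₀ = ![![0,0,1],![1,0,0],![0,1,1]]`. -/
def A0 : Matrix (Fin 3) (Fin 3) ℝ := !![0,0,1; 1,0,0; 0,1,1]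
/-- `A₁ = ![![1,0,1],![0,1,0],![0,0,1]]`. -/
def A1 : Matrix (Fin 3) (Fin 3) ℝ := !![1,0,1; 0,1,0; 0,0,1]
/-- `B = ![![1,1,1],![0,1,1],![0,0,1]]`. -/
def Bm : Matrix (Fin 3) (Fin 3) ℝ := !![1,1,1; 0,1,1; 0,0,1]

/-- The permutation matrix of `ρ`: entry `(i,j)` is `1` iff `ρ i = j`.  In particular
`P (finRotate 3)`, the matrix of the cycle `(1 2 3)`, is `![![0,1,0],![0,0,1],![1,0,0]]`. -/
def P (ρ : Equiv.Perm (Fin 3)) : Matrix (Fin 3) (Fin 3) ℝ := ρ.permMatrix ℝ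

/-- The pair of TRIP matrices `F₀ = P_σ·A₀·P_{τ₀}`, `F₁ = P_σ·A₁·P_{τ₁}` of a triple
of permutations, as a function `Fin 2 → Matrix`. -/
def Fmat (σ τ0 τ1 : Equiv.Perm (Fin 3)) : Fin 2 → Matrix (Fin 3) (Fin 3) ℝ :=
  ![P σ * A0 * P τ0, P σ * A1 * P τ1]

/-- `prodMat G n = B · (G 0) · (G 1) ⋯ (G n)`. -/
def prodMat (G : ℕ → Matrix (Fin 3) (Fin 3) ℝ) (n : ℕ) : Matrix (Fin 3) (Fin 3) ℝ :=
  Bm * ((List.range (n+1)).map G).prod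

/-- The triangle `Δ(i₀,…,iₙ)`: the convex hull of the images under
`π(x₀,x₁,x₂) = (x₁/x₀, x₂/x₀)` of the three columns of `M`. -/
def tri (M : Matrix (Fin 3) (Fin 3) ℝ) : Set (ℝ × ℝ) :=
  convexHull ℝ {p | ∃ j : Fin 3, p = (M 1 j / M 0 j, M 2 j / M 0 j)}

/-- `Δ(i₀,i₁,…) = ⋂ₙ Δ(i₀,…,iₙ)`, for the sequence of matrices `G m = F_{i_m}`. -/
def DeltaInf (G : ℕ → Matrix (Fin 3) (Fin 3) ℝ) : Set (ℝ × ℝ) :=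
  ⋂ n : ℕ, tri (prodMat G n)

namespace TripAux

abbrev Mat3 := Matrix (Fin 3) (Fin 3) ℝ

def Good (M : Mat3) : Prop :=
  (∀ a b, 0 ≤ M a b) ∧ (∀ b, ∃ a, 0 < M a b) ∧ IsUnit M

def Pos1 (M : Mat3) : Prop := ∀ j, 0 < M 0 j

lemma Good.mul {M N : Mat3} (hM : Good M) (hN : Good N) : Good (M * N) := by
  obtain ⟨hM0, hM1, hM2⟩ := hM
  obtain ⟨hN0, hN1, hN2⟩ := hN
  refine ⟨fun a b => ?_, fun b => ?_, hM2.mul hN2⟩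
  · rw [Matrix.mul_apply]
    exact Finset.sum_nonneg fun k _ => mul_nonneg (hM0 _ _) (hN0 _ _)
  · obtain ⟨k, hk⟩ := hN1 b
    obtain ⟨a, ha⟩ := hM1 k
    refine ⟨a, ?_⟩
    rw [Matrix.mul_apply]
    refine Finset.sum_pos' (fun l _ => mul_nonneg (hM0 _ _) (hN0 _ _)) ⟨k, Finset.mem_univ _, mul_pos ha hk⟩

lemma P_apply (ρ : Equiv.Perm (Fin 3)) (a b : Fin 3) :
    P ρ a b = if ρ a = b then 1 else 0 := by
  simp [P, Equiv.Perm.permMatrix, PEquiv.toMatrix, Equiv.toPEquiv, Option.mem_def, eq_comm]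

lemma good_P (ρ : Equiv.Perm (Fin 3)) : Good (P ρ) := by
  refine ⟨fun a b => ?_, fun b => ⟨ρ.symm b, ?_⟩, ?_⟩
  · rw [P_apply]; positivity
  · rw [P_apply]; simp
  · rw [Matrix.isUnit_iff_isUnit_det]
    show IsUnit (ρ.permMatrix ℝ).det
    rw [Matrix.det_permutation]
    rcases Int.units_eq_one_or (Equiv.Perm.sign ρ) with h | h <;> rw [h] <;> simp

lemma good_A0 : Good A0 := by
  refine ⟨fun a b => ?_, fun b => ?_, ?_⟩
  · fin_cases a <;> fin_cases b <;> norm_num [A0]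
  · fin_cases b
    · exact ⟨1, by norm_num [A0, Matrix.vecHead, Matrix.vecTail, Function.comp]⟩
    · exact ⟨2, by norm_num [A0, Matrix.vecHead, Matrix.vecTail, Function.comp, Matrix.cons_val_two]⟩
    · exact ⟨0, by norm_num [A0, Matrix.vecHead, Matrix.vecTail, Function.comp]⟩
  · rw [Matrix.isUnit_iff_isUnit_det]
    have : A0.det = 1 := by rw [A0, Matrix.det_fin_three]; norm_num [Matrix.vecHead, Matrix.vecTail, Function.comp, Matrix.cons_val_two]
    rw [this]; exact isUnit_one

lemma good_A1 : Good A1 := by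
  refine ⟨fun a b => ?_, fun b => ?_, ?_⟩
  · fin_cases a <;> fin_cases b <;> norm_num [A1]
  · fin_cases b
    · exact ⟨0, by norm_num [A1, Matrix.vecHead, Matrix.vecTail, Function.comp]⟩
    · exact ⟨1, by norm_num [A1, Matrix.vecHead, Matrix.vecTail, Function.comp]⟩
    · exact ⟨0, by norm_num [A1, Matrix.vecHead, Matrix.vecTail, Function.comp]⟩
  · rw [Matrix.isUnit_iff_isUnit_det]
    have : A1.det = 1 := by rw [A1, Matrix.det_fin_three]; norm_num [Matrix.vecHead, Matrix.vecTail, Function.comp, Matrix.cons_val_two]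
    rw [this]; exact isUnit_one

lemma detBm : Bm.det = 1 := by rw [Bm, Matrix.det_fin_three]; norm_num [Matrix.vecHead, Matrix.vecTail, Function.comp, Matrix.cons_val_two]

lemma isUnit_Bm : IsUnit Bm := by
  rw [Matrix.isUnit_iff_isUnit_det, detBm]; exact isUnit_one

lemma good_Fmat (σ τ0 τ1 : Equiv.Perm (Fin 3)) (d : Fin 2) : Good (Fmat σ τ0 τ1 d) := by
  fin_cases d
  · exact ((good_P σ).mul good_A0).mul (good_P τ0)
  · exact ((good_P σ).mul good_A1).mul (good_P τ1)

lemma pos1_mul {M G : Mat3} (hM : Pos1 M) (hG : Good G) : Pos1 (M * G) := by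
  intro j
  obtain ⟨a, ha⟩ := hG.2.1 j
  rw [Matrix.mul_apply]
  exact Finset.sum_pos' (fun l _ => mul_nonneg (hM l).le (hG.1 _ _)) ⟨a, Finset.mem_univ _, mul_pos (hM a) ha⟩

lemma pos1_Bm : Pos1 Bm := by intro j; fin_cases j <;> norm_num [Bm]

lemma prodMat_zero (G : ℕ → Mat3) : prodMat G 0 = Bm * G 0 := by
  simp [prodMat, List.range_succ]

lemma prodMat_succ (G : ℕ → Mat3) (n : ℕ) :
    prodMat G (n+1) = prodMat G n * G (n+1) := by
  rw [prodMat, prodMat, List.range_succ, List.map_append, List.prod_append, Matrix.mul_assoc]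
  simp

lemma pos1_prodMat {G : ℕ → Mat3} (hG : ∀ m, Good (G m)) (n : ℕ) :
    Pos1 (prodMat G n) := by
  induction n with
  | zero => rw [prodMat_zero]; exact pos1_mul pos1_Bm (hG 0)
  | succ n ih => rw [prodMat_succ]; exact pos1_mul ih (hG (n+1))

end TripAux

namespace TripAux

def lift (p : ℝ × ℝ) : Fin 3 → ℝ := ![1, p.1, p.2]
def proj (u : Fin 3 → ℝ) : ℝ × ℝ := (u 1 / u 0, u 2 / u 0)

lemma lift_zero (p : ℝ × ℝ) : lift p 0 = 1 := rfl

lemma proj_lift (p : ℝ × ℝ) : proj (lift p) = p := by simp [proj, lift]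

lemma proj_smul {t : ℝ} (ht : t ≠ 0) (u : Fin 3 → ℝ) : proj (t • u) = proj u := by
  simp only [proj, Pi.smul_apply, smul_eq_mul]
  rw [mul_div_mul_left _ _ ht, mul_div_mul_left _ _ ht]

lemma lift_proj {u : Fin 3 → ℝ} (h : 0 < u 0) : lift (proj u) = (u 0)⁻¹ • u := by
  funext i
  fin_cases i <;> simp [lift, proj, div_eq_inv_mul]
  exact (inv_mul_cancel₀ h.ne').symm

lemma lift_injective : Function.Injective lift := by
  intro p p' h
  have := congrArg proj h
  rwa [proj_lift, proj_lift] at this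

lemma mem_tri_iff {M : Mat3} (hM : Pos1 M) {p : ℝ × ℝ} :
    p ∈ tri M ↔ ∃ c : Fin 3 → ℝ, (∀ j, 0 ≤ c j) ∧ M *ᵥ c = lift p := by
  have hne : ∀ j : Fin 3, M 0 j ≠ 0 := fun j => (hM j).ne'
  constructor
  · intro hp
    rw [tri, mem_convexHull_iff_exists_fintype] at hp
    obtain ⟨ι, _, w, z, hw0, hw1, hz, hx⟩ := hp
    choose g hg using hz
    refine ⟨fun j => (∑ i ∈ Finset.univ.filter (fun i => g i = j), w i) / M 0 j,
      fun j => div_nonneg (Finset.sum_nonneg fun i _ => hw0 i) (hM j).le, ?_⟩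
    funext i0
    have key : (M *ᵥ fun j => (∑ i ∈ Finset.univ.filter (fun i => g i = j), w i) / M 0 j) i0
        = ∑ i, w i * (M i0 (g i) / M 0 (g i)) := by
      rw [Matrix.mulVec]
      show (∑ j, M i0 j * ((∑ i ∈ Finset.univ.filter (fun i => g i = j), w i) / M 0 j)) = _
      rw [← Finset.sum_fiberwise Finset.univ g (fun i => w i * (M i0 (g i) / M 0 (g i)))]
      refine Finset.sum_congr rfl fun j _ => ?_
      rw [show (∑ i ∈ Finset.univ.filter (fun i => g i = j), w i * (M i0 (g i) / M 0 (g i)))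
            = ∑ i ∈ Finset.univ.filter (fun i => g i = j), w i * (M i0 j / M 0 j) from
          Finset.sum_congr rfl fun i hi => by rw [(Finset.mem_filter.1 hi).2]]
      rw [← Finset.sum_mul]
      ring
    rw [key]
    fin_cases i0
    · simp only [lift_zero]
      calc ∑ i, w i * (M 0 (g i) / M 0 (g i)) = ∑ i, w i := by
            refine Finset.sum_congr rfl fun i _ => by rw [div_self (hne _), mul_one]
        _ = 1 := hw1
    · show _ = p.1
      rw [← hx, Prod.fst_sum]
      refine Finset.sum_congr rfl fun i _ => ?_
      rw [hg i]
      simp [mul_comm]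
    · show _ = p.2
      rw [← hx, Prod.snd_sum]
      refine Finset.sum_congr rfl fun i _ => ?_
      rw [hg i]
      simp [mul_comm]
  · rintro ⟨c, hc, hMc⟩
    have h0 : ∑ j, M 0 j * c j = 1 := by
      have := congrFun hMc 0
      rwa [lift_zero, Matrix.mulVec] at this
    apply mem_convexHull_of_exists_fintype (w := fun j => c j * M 0 j)
      (z := fun j => (M 1 j / M 0 j, M 2 j / M 0 j))
    · exact fun j => mul_nonneg (hc j) (hM j).le
    · rw [← h0]; exact Finset.sum_congr rfl fun j _ => mul_comm _ _
    · exact fun j => ⟨j, rfl⟩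
    · apply Prod.ext
      · rw [Prod.fst_sum]
        have h1 := congrFun hMc 1
        rw [Matrix.mulVec] at h1
        show (∑ j, ((c j * M 0 j) • ((M 1 j / M 0 j, M 2 j / M 0 j) : ℝ × ℝ)).1) = p.1
        calc (∑ j, ((c j * M 0 j) • ((M 1 j / M 0 j, M 2 j / M 0 j) : ℝ × ℝ)).1)
            = ∑ j, M 1 j * c j := by
              refine Finset.sum_congr rfl fun j _ => ?_
              show (c j * M 0 j) * (M 1 j / M 0 j) = M 1 j * c j
              have hb := hne j
              field_simp
          _ = p.1 := h1
      · rw [Prod.snd_sum]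
        have h2 := congrFun hMc 2
        rw [Matrix.mulVec] at h2
        calc (∑ j, ((c j * M 0 j) • ((M 1 j / M 0 j, M 2 j / M 0 j) : ℝ × ℝ)).2)
            = ∑ j, M 2 j * c j := by
              refine Finset.sum_congr rfl fun j _ => ?_
              show (c j * M 0 j) * (M 2 j / M 0 j) = M 2 j * c j
              have hb := hne j
              field_simp
          _ = p.2 := h2

end TripAux

namespace TripAux

lemma tri_mul_subset {M G : Mat3} (hM : Pos1 M) (hG : Good G) : tri (M * G) ⊆ tri M := by
  intro p hp
  rw [mem_tri_iff (pos1_mul hM hG)] at hp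
  obtain ⟨c, hc, hMc⟩ := hp
  rw [mem_tri_iff hM]
  refine ⟨G *ᵥ c, fun j => ?_, ?_⟩
  · rw [Matrix.mulVec]
    exact Finset.sum_nonneg fun l _ => mul_nonneg (hG.1 _ _) (hc l)
  · rw [Matrix.mulVec_mulVec]
    exact hMc

lemma exists_pos_coeff {M : Mat3} (hM : Pos1 M) {c : Fin 3 → ℝ}
    (hc : ∀ j, 0 ≤ c j) (h : (M *ᵥ c) 0 = 1) : ∃ j, 0 < c j := by
  by_contra hcon
  push_neg at hcon
  have hz : ∀ j, c j = 0 := fun j => le_antisymm (hcon j) (hc j)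
  rw [Matrix.mulVec] at h
  simp only [dotProduct] at h
  rw [Finset.sum_eq_zero (fun j _ => by rw [hz j, mul_zero])] at h
  norm_num at h

lemma mulVec_pos {M : Mat3} (hM : Pos1 M) {c : Fin 3 → ℝ}
    (hc : ∀ j, 0 ≤ c j) (hpos : ∃ j, 0 < c j) : 0 < (M *ᵥ c) 0 := by
  obtain ⟨j, hj⟩ := hpos
  rw [Matrix.mulVec]
  exact Finset.sum_pos' (fun l _ => mul_nonneg (hM l).le (hc l))
    ⟨j, Finset.mem_univ _, mul_pos (hM j) hj⟩

lemma step (G : ℕ → Mat3) (hG : ∀ m, Good (G m)) :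
    (∃ q : ℝ × ℝ, DeltaInf G = {q}) ↔
      ∃ q : ℝ × ℝ, DeltaInf (fun m => G (m+1)) = {q} := by
  set G' : ℕ → Mat3 := fun m => G (m+1) with hG'def
  have hG'g : ∀ m, Good (G' m) := fun m => hG (m+1)
  have hBdet : IsUnit Bm.det := by rw [detBm]; exact isUnit_one
  set C : Mat3 := Bm * G 0 * Bm⁻¹ with hCdef
  have hCdet : IsUnit C.det := by
    rw [hCdef, Matrix.det_mul, Matrix.det_mul]
    exact ((hBdet.mul ((Matrix.isUnit_iff_isUnit_det _).1 (hG 0).2.2)).mul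
      (Matrix.isUnit_nonsing_inv_det _ hBdet))
  have hCN : ∀ n, C * prodMat G' n = prodMat G (n+1) := by
    intro n
    rw [prodMat, prodMat]
    have hlist : (List.range (n+1+1)).map G = G 0 :: (List.range (n+1)).map G' := by
      rw [List.range_succ_eq_map]
      simp [List.map_map, Function.comp, hG'def]
    rw [hlist, List.prod_cons, hCdef]
    rw [Matrix.mul_assoc (Bm * G 0) _ _, ← Matrix.mul_assoc Bm⁻¹ Bm _,
      Matrix.nonsing_inv_mul _ hBdet, Matrix.one_mul, Matrix.mul_assoc]
  set T : ℝ × ℝ → ℝ × ℝ := fun p => proj (C *ᵥ lift p) with hTdef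
  -- image lemma
  have himg : ∀ n, tri (prodMat G (n+1)) = T '' tri (prodMat G' n) := by
    intro n
    ext q
    constructor
    · intro hq
      rw [mem_tri_iff (pos1_prodMat hG (n+1))] at hq
      obtain ⟨c, hc, hMc⟩ := hq
      have hc1 : (prodMat G (n+1) *ᵥ c) 0 = 1 := by rw [hMc, lift_zero]
      have hcp : ∃ j, 0 < c j := exists_pos_coeff (pos1_prodMat hG (n+1)) hc hc1
      have htp : 0 < (prodMat G' n *ᵥ c) 0 := mulVec_pos (pos1_prodMat hG'g n) hc hcp
      refine ⟨proj (prodMat G' n *ᵥ c), ?_, ?_⟩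
      · rw [mem_tri_iff (pos1_prodMat hG'g n)]
        refine ⟨((prodMat G' n *ᵥ c) 0)⁻¹ • c,
          fun j => mul_nonneg (inv_nonneg.2 htp.le) (hc j), ?_⟩
        rw [Matrix.mulVec_smul, lift_proj htp]
      · show proj (C *ᵥ lift (proj (prodMat G' n *ᵥ c))) = q
        rw [lift_proj htp, Matrix.mulVec_smul, Matrix.mulVec_mulVec, hCN, hMc,
          proj_smul (inv_ne_zero htp.ne'), proj_lift]
    · rintro ⟨p, hp, rfl⟩
      rw [mem_tri_iff (pos1_prodMat hG'g n)] at hp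
      obtain ⟨c, hc, hNc⟩ := hp
      have hc1 : (prodMat G' n *ᵥ c) 0 = 1 := by rw [hNc, lift_zero]
      have hcp : ∃ j, 0 < c j := exists_pos_coeff (pos1_prodMat hG'g n) hc hc1
      have hsp : 0 < (prodMat G (n+1) *ᵥ c) 0 := mulVec_pos (pos1_prodMat hG (n+1)) hc hcp
      rw [mem_tri_iff (pos1_prodMat hG (n+1))]
      refine ⟨((prodMat G (n+1) *ᵥ c) 0)⁻¹ • c,
        fun j => mul_nonneg (inv_nonneg.2 hsp.le) (hc j), ?_⟩
      rw [Matrix.mulVec_smul]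
      show _ = lift (proj (C *ᵥ lift p))
      rw [← hNc, Matrix.mulVec_mulVec, hCN, lift_proj hsp]
  -- injectivity
  have hTinj : ∀ {n n' : ℕ} {p p' : ℝ × ℝ}, p ∈ tri (prodMat G' n) →
      p' ∈ tri (prodMat G' n') → T p = T p' → p = p' := by
    intro n n' p p' hp hp' hT
    obtain ⟨c, hc, hNc⟩ := (mem_tri_iff (pos1_prodMat hG'g n)).1 hp
    obtain ⟨c', hc', hNc'⟩ := (mem_tri_iff (pos1_prodMat hG'g n')).1 hp'
    have hc1 : (prodMat G' n *ᵥ c) 0 = 1 := by rw [hNc, lift_zero]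
    have hc1' : (prodMat G' n' *ᵥ c') 0 = 1 := by rw [hNc', lift_zero]
    have hd : 0 < (C *ᵥ lift p) 0 := by
      rw [← hNc, Matrix.mulVec_mulVec, hCN]
      exact mulVec_pos (pos1_prodMat hG (n+1)) hc
        (exists_pos_coeff (pos1_prodMat hG'g n) hc hc1)
    have hd' : 0 < (C *ᵥ lift p') 0 := by
      rw [← hNc', Matrix.mulVec_mulVec, hCN]
      exact mulVec_pos (pos1_prodMat hG (n'+1)) hc'
        (exists_pos_coeff (pos1_prodMat hG'g n') hc' hc1')
    have h1 := congrArg lift hT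
    rw [hTdef] at h1
    simp only at h1
    rw [lift_proj hd, lift_proj hd', ← Matrix.mulVec_smul, ← Matrix.mulVec_smul] at h1
    have h2 := congrArg (fun v => C⁻¹ *ᵥ v) h1
    simp only [Matrix.mulVec_mulVec, Matrix.nonsing_inv_mul C hCdet, Matrix.one_mulVec] at h2
    have h0 := congrFun h2 0
    simp only [Pi.smul_apply, lift_zero, smul_eq_mul, mul_one] at h0
    rw [h0] at h2
    have hlift : lift p = lift p' := by
      have := smul_right_injective (Fin 3 → ℝ) (inv_ne_zero hd'.ne') h2
      exact this
    exact lift_injective hlift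
  -- key1 : from q in all triangles, produce preimage point in DeltaInf G'
  have key1 : ∀ q : ℝ × ℝ, (∀ n, q ∈ tri (prodMat G n)) →
      ∃ p₀, p₀ ∈ DeltaInf G' ∧ T p₀ = q := by
    intro q hq
    have hpm : ∀ m, ∃ p, p ∈ tri (prodMat G' m) ∧ T p = q := by
      intro m
      have h := hq (m+1)
      rw [himg m] at h
      obtain ⟨p, hp, hTp⟩ := h
      exact ⟨p, hp, hTp⟩
    choose pm hpm1 hpm2 using hpm
    have hpe : ∀ m, pm m = pm 0 := fun m =>
      hTinj (hpm1 m) (hpm1 0) (by rw [hpm2, hpm2])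
    refine ⟨pm 0, Set.mem_iInter.2 fun m => (hpe m) ▸ hpm1 m, hpm2 0⟩
  -- key2 : T maps DeltaInf G' into DeltaInf G
  have key2 : ∀ p, p ∈ DeltaInf G' → T p ∈ DeltaInf G := by
    intro p hp
    refine Set.mem_iInter.2 fun n => ?_
    match n with
    | 0 =>
      have h1 : T p ∈ tri (prodMat G 1) := by
        rw [himg 0]; exact ⟨p, Set.mem_iInter.1 hp 0, rfl⟩
      have hsub : tri (prodMat G 1) ⊆ tri (prodMat G 0) := by
        rw [prodMat_succ]
        exact tri_mul_subset (pos1_prodMat hG 0) (hG 1)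
      exact hsub h1
    | (n+1) =>
      rw [himg n]
      exact ⟨p, Set.mem_iInter.1 hp n, rfl⟩
  constructor
  · rintro ⟨q, hq⟩
    have hqmem : ∀ n, q ∈ tri (prodMat G n) := by
      intro n
      have : q ∈ DeltaInf G := by rw [hq]; rfl
      exact Set.mem_iInter.1 this n
    obtain ⟨p₀, hp₀, hTp₀⟩ := key1 q hqmem
    refine ⟨p₀, Set.eq_singleton_iff_unique_mem.2 ⟨hp₀, ?_⟩⟩
    intro p' hp'
    have hT' : T p' ∈ DeltaInf G := key2 p' hp'
    rw [hq] at hT'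
    exact hTinj (Set.mem_iInter.1 hp' 0) (Set.mem_iInter.1 hp₀ 0)
      (by rw [hTp₀]; exact hT')
  · rintro ⟨p, hp⟩
    have hpmem : p ∈ DeltaInf G' := by rw [hp]; rfl
    refine ⟨T p, Set.eq_singleton_iff_unique_mem.2 ⟨key2 p hpmem, ?_⟩⟩
    intro q hq
    obtain ⟨p₀, hp₀, hTp₀⟩ := key1 q (fun n => Set.mem_iInter.1 hq n)
    have : p₀ = p := by rw [hp] at hp₀; exact hp₀
    rw [← hTp₀, this]

end TripAux

/-- The intersection `Δ(i₀,i₁,…)` (for a Combo TRIP map given by a sequence of triples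
of permutations) is a singleton iff the intersection `Δ(i_k,i_{k+1},…)` formed from the
shifted digit sequence and shifted sequence of triples is a singleton. -/
theorem singleton_iff_shift_singleton
    (σ τ0 τ1 : ℕ → Equiv.Perm (Fin 3)) (i : ℕ → Fin 2) (k : ℕ) :
    (∃ q : ℝ × ℝ, DeltaInf (fun m => Fmat (σ m) (τ0 m) (τ1 m) (i m)) = {q}) ↔
    (∃ q : ℝ × ℝ,
      DeltaInf (fun m => Fmat (σ (m + k)) (τ0 (m + k)) (τ1 (m + k)) (i (m + k))) = {q}) := by
  induction k with
  | zero => simp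
  | succ k ih =>
    rw [ih]
    have h := TripAux.step (fun m => Fmat (σ (m+k)) (τ0 (m+k)) (τ1 (m+k)) (i (m+k)))
      (fun m => TripAux.good_Fmat _ _ _ _)
    simp only [show ∀ m : ℕ, m+1+k = m+(k+1) from fun m => by omega] at h
    exact h
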